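/- Let a > 0 and define h(β) = e^{β}·(a + 1 − e^{−2β}) / (2β) for β > 0 (the asymptotic variance for Gaussian sensing noise, after the substitution β = σ²ω²). Then there exists a unique β* > 0 satisfying the stationarity equation (a + 1)·(β − 1)·e^{2β} + β + 1 = 0, and β* is the unique global minimizer of h on (0, ∞); in particular h is strictly decreasing on (0, β*]. Consequently, for σ, θ_R > 0, the minimizer of h(σ²ω²) over ω ∈ (0, 2π/θ_R] is ω* = min( 2π/θ_R, √β*/σ ). -/

import Mathlib

open Filter Topology Set

noncomputable def sfun (a : ℝ) (β : ℝ) : ℝ :=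
  (a + 1) * (β - 1) + (β + 1) * Real.exp (-2 * β)

lemma sfun_hasDerivAt (a β : ℝ) :
    HasDerivAt (sfun a) ((a + 1) - (2 * β + 1) * Real.exp (-2 * β)) β := by
  have hg : HasDerivAt (fun x : ℝ => -2 * x) (-2) β := by
    simpa using (hasDerivAt_id β).const_mul (-2 : ℝ)
  have h2 : HasDerivAt (fun x : ℝ => Real.exp (-2 * x)) (Real.exp (-2 * β) * -2) β :=
    (Real.hasDerivAt_exp (-2 * β)).comp β hg
  have h3 : HasDerivAt (fun x : ℝ => (x + 1) * Real.exp (-2 * x))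
      (1 * Real.exp (-2 * β) + (β + 1) * (Real.exp (-2 * β) * -2)) β :=
    ((hasDerivAt_id β).add_const 1).mul h2
  have h1 : HasDerivAt (fun x : ℝ => (a + 1) * (x - 1)) ((a + 1) * 1) β :=
    ((hasDerivAt_id β).sub_const 1).const_mul (a + 1)
  have := h1.add h3
  refine this.congr_deriv ?_
  ring

lemma sfun_strictMonoOn (a : ℝ) (ha : 0 < a) : StrictMonoOn (sfun a) (Ici 0) := by
  apply strictMonoOn_of_deriv_pos (convex_Ici 0)
  · exact fun x _ => (sfun_hasDerivAt a x).continuousAt.continuousWithinAt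
  · intro x hx
    rw [interior_Ici] at hx
    rw [(sfun_hasDerivAt a x).deriv]
    have hx0 : (0 : ℝ) < x := hx
    have hlt : 2 * x + 1 < Real.exp (2 * x) := by
      have := Real.add_one_lt_exp (by positivity : (2:ℝ) * x ≠ 0)
      linarith
    have hkey : (2 * x + 1) * Real.exp (-2 * x) < 1 := by
      rw [show (-2 : ℝ) * x = -(2 * x) by ring, Real.exp_neg, ← div_eq_mul_inv,
        div_lt_one (Real.exp_pos _)]
      exact hlt
    linarith

lemma h_hasDerivAt (a : ℝ) {β : ℝ} (hβ : β ≠ 0) :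
    HasDerivAt (fun x => Real.exp x * (a + 1 - Real.exp (-2 * x)) / (2 * x))
      (Real.exp β * sfun a β / (2 * β ^ 2)) β := by
  have hg : HasDerivAt (fun x : ℝ => -2 * x) (-2) β := by
    simpa using (hasDerivAt_id β).const_mul (-2 : ℝ)
  have h2 : HasDerivAt (fun x : ℝ => Real.exp (-2 * x)) (Real.exp (-2 * β) * -2) β :=
    (Real.hasDerivAt_exp (-2 * β)).comp β hg
  have hu : HasDerivAt (fun x : ℝ => Real.exp x * (a + 1 - Real.exp (-2 * x)))
      (Real.exp β * (a + 1 - Real.exp (-2 * β)) +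
        Real.exp β * (0 - Real.exp (-2 * β) * -2)) β :=
    (Real.hasDerivAt_exp β).mul ((hasDerivAt_const β (a + 1)).sub h2)
  have hv : HasDerivAt (fun x : ℝ => 2 * x) 2 β := by
    simpa using (hasDerivAt_id β).const_mul (2 : ℝ)
  have hv0 : 2 * β ≠ 0 := by simpa using hβ
  have := hu.div hv hv0
  refine this.congr_deriv ?_
  unfold sfun
  field_simp
  ring

theorem gaussian_asv_optimal_omega
    (a : ℝ) (ha : 0 < a)
    (h : ℝ → ℝ)
    (hh : ∀ β, h β = Real.exp β * (a + 1 - Real.exp (-2 * β)) / (2 * β)) :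
    ∃ βs : ℝ, 0 < βs ∧
      ((a + 1) * (βs - 1) * Real.exp (2 * βs) + βs + 1 = 0) ∧
      (∀ β > (0 : ℝ), (a + 1) * (β - 1) * Real.exp (2 * β) + β + 1 = 0 → β = βs) ∧
      (∀ β > (0 : ℝ), β ≠ βs → h βs < h β) ∧
      StrictAntiOn h (Set.Ioc 0 βs) ∧
      ∀ σ θR : ℝ, 0 < σ → 0 < θR →
        min (2 * Real.pi / θR) (Real.sqrt βs / σ) ∈ Set.Ioc 0 (2 * Real.pi / θR) ∧
        ∀ ω ∈ Set.Ioc 0 (2 * Real.pi / θR),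
          h (σ ^ 2 * (min (2 * Real.pi / θR) (Real.sqrt βs / σ)) ^ 2)
            ≤ h (σ ^ 2 * ω ^ 2) := by
  have hfun : h = fun x => Real.exp x * (a + 1 - Real.exp (-2 * x)) / (2 * x) := funext hh
  have hmono := sfun_strictMonoOn a ha
  -- existence of a root of sfun in (0,1)
  have hs0 : sfun a 0 = -a := by simp [sfun]
  have hs1 : 0 < sfun a 1 := by
    have : sfun a 1 = 2 * Real.exp (-2) := by simp [sfun]; ring
    rw [this]; positivity
  have hcont : ContinuousOn (sfun a) (Icc 0 1) :=
    fun x _ => (sfun_hasDerivAt a x).continuousAt.continuousWithinAt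
  have hmem : (0 : ℝ) ∈ Ioo (sfun a 0) (sfun a 1) := by
    rw [hs0]; exact ⟨by linarith, hs1⟩
  obtain ⟨βs, hβsmem, hroot⟩ := intermediate_value_Ioo (by norm_num : (0:ℝ) ≤ 1) hcont hmem
  obtain ⟨hβs0, hβs1⟩ := hβsmem
  have hroot' : (a + 1) * (βs - 1) + (βs + 1) * Real.exp (-2 * βs) = 0 := hroot
  -- derivative of h
  have hd : ∀ x : ℝ, x ≠ 0 → HasDerivAt h (Real.exp x * sfun a x / (2 * x ^ 2)) x := by
    intro x hx
    rw [hfun]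
    exact h_hasDerivAt a hx
  -- h strictly decreasing on (0, βs]
  have hanti : StrictAntiOn h (Set.Ioc 0 βs) := by
    apply strictAntiOn_of_deriv_neg (convex_Ioc 0 βs)
    · exact fun x hx => (hd x (ne_of_gt hx.1)).continuousAt.continuousWithinAt
    · intro x hx
      rw [interior_Ioc] at hx
      rw [(hd x (ne_of_gt hx.1)).deriv]
      have hneg : sfun a x < 0 := by
        have := hmono (mem_Ici.mpr hx.1.le) (mem_Ici.mpr hβs0.le) hx.2
        rwa [hroot] at this
      have hn : Real.exp x * sfun a x < 0 := mul_neg_of_pos_of_neg (Real.exp_pos x) hneg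
      apply div_neg_of_neg_of_pos hn
      have := hx.1
      positivity
  -- h strictly increasing on [βs, ∞)
  have hmonoh : StrictMonoOn h (Set.Ici βs) := by
    apply strictMonoOn_of_deriv_pos (convex_Ici βs)
    · exact fun x hx =>
        (hd x (ne_of_gt (lt_of_lt_of_le hβs0 hx))).continuousAt.continuousWithinAt
    · intro x hx
      rw [interior_Ici] at hx
      have hx0 : (0 : ℝ) < x := lt_trans hβs0 hx
      rw [(hd x (ne_of_gt hx0)).deriv]
      have hpos : 0 < sfun a x := by
        have := hmono (mem_Ici.mpr hβs0.le) (mem_Ici.mpr hx0.le) hx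
        rwa [hroot] at this
      positivity
  -- global minimum
  have hglobal : ∀ β > (0 : ℝ), β ≠ βs → h βs < h β := by
    intro β hβ hne
    rcases lt_or_gt_of_ne hne with hlt | hgt
    · exact hanti ⟨hβ, hlt.le⟩ ⟨hβs0, le_refl βs⟩ hlt
    · exact hmonoh (mem_Ici.mpr le_rfl) (mem_Ici.mpr hgt.le) hgt
  -- stationarity equation at βs
  have hE : ∀ t : ℝ, Real.exp (2 * t) * Real.exp (-2 * t) = 1 := by
    intro t
    rw [← Real.exp_add]
    norm_num
  have hg : (a + 1) * (βs - 1) * Real.exp (2 * βs) + βs + 1 = 0 := by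
    linear_combination Real.exp (2 * βs) * hroot' - (βs + 1) * hE βs
  -- uniqueness of the root
  have huniq : ∀ β > (0 : ℝ), (a + 1) * (β - 1) * Real.exp (2 * β) + β + 1 = 0 → β = βs := by
    intro β hβ heq
    have key : sfun a β * Real.exp (2 * β) = 0 := by
      unfold sfun
      linear_combination heq + (β + 1) * hE β
    have hsβ : sfun a β = 0 := by
      rcases mul_eq_zero.mp key with h1 | h1
      · exact h1
      · exact absurd h1 (Real.exp_pos _).ne'
    exact hmono.injOn (mem_Ici.mpr hβ.le) (mem_Ici.mpr hβs0.le) (hsβ.trans hroot.symm)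
  refine ⟨βs, hβs0, hg, huniq, hglobal, hanti, ?_⟩
  intro σ θR hσ hθR
  set c := 2 * Real.pi / θR with hc
  have hcpos : 0 < c := by
    rw [hc]
    have := Real.pi_pos
    positivity
  have hsqpos : 0 < Real.sqrt βs := Real.sqrt_pos.mpr hβs0
  constructor
  · exact ⟨lt_min hcpos (by positivity), min_le_left _ _⟩
  · intro ω hω
    obtain ⟨hω0, hωc⟩ := hω
    rcases le_total (Real.sqrt βs / σ) c with hcase | hcase
    · rw [min_eq_right hcase]
      have heq : σ ^ 2 * (Real.sqrt βs / σ) ^ 2 = βs := by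
        rw [div_pow, Real.sq_sqrt hβs0.le]
        field_simp
      rw [heq]
      have hpos : 0 < σ ^ 2 * ω ^ 2 := by positivity
      rcases eq_or_ne (σ ^ 2 * ω ^ 2) βs with he | hne
      · rw [he]
      · exact (hglobal _ hpos hne).le
    · rw [min_eq_left hcase]
      have h1 : σ * c ≤ Real.sqrt βs := by
        rw [le_div_iff₀ hσ] at hcase
        linarith
    -- σ² c² ≤ βs
      have hle : σ ^ 2 * c ^ 2 ≤ βs := by
        have h2 := mul_self_le_mul_self (by positivity : (0:ℝ) ≤ σ * c) h1
        have h3 := Real.sq_sqrt hβs0.le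
        nlinarith
      have hωle : σ ^ 2 * ω ^ 2 ≤ σ ^ 2 * c ^ 2 :=
        mul_le_mul_of_nonneg_left (pow_le_pow_left₀ hω0.le hωc 2) (by positivity)
      exact (hanti.antitoneOn ⟨by positivity, le_trans hωle hle⟩ ⟨by positivity, hle⟩ hωle)
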